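/- Let a, α ∈ ℝ, let π₁, π₂ > 0, and let ξ₁, ξ₂ : ℤ⁺ → (0, ∞) be strictly positive sequences. Suppose that for every positive integer p, π₁ ξ₁(p) sin(pa − α) + π₂ ξ₂(p) sin(−pa − α) = 0. Then sin α = 0. -/

import Mathlib

/-- If `π₁ ξ₁(p) sin(pa − α) + π₂ ξ₂(p) sin(−pa − α) = 0` for every positive integer `p`,
with `π₁, π₂ > 0` and strictly positive sequences `ξ₁, ξ₂`, then `sin α = 0`. -/
theorem weighted_sine_vanishing_implies_sin_zero
    (a α π₁ π₂ : ℝ) (hπ₁ : 0 < π₁) (hπ₂ : 0 < π₂)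
    (ξ₁ ξ₂ : ℕ → ℝ)
    (hξ₁ : ∀ p : ℕ, 0 < p → 0 < ξ₁ p)
    (hξ₂ : ∀ p : ℕ, 0 < p → 0 < ξ₂ p)
    (h : ∀ p : ℕ, 0 < p →
      π₁ * ξ₁ p * Real.sin (p * a - α) + π₂ * ξ₂ p * Real.sin (-(p * a) - α) = 0) :
    Real.sin α = 0 := by
  -- Step 1: for every positive `p`, `sin α ^ 2 ≤ sin (p * a) ^ 2`.
  have key : ∀ p : ℕ, 0 < p → Real.sin α ^ 2 ≤ Real.sin (p * a) ^ 2 := by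
    intro p hp
    have hA : 0 < π₁ * ξ₁ p := mul_pos hπ₁ (hξ₁ p hp)
    have hB : 0 < π₂ * ξ₂ p := mul_pos hπ₂ (hξ₂ p hp)
    have hp' := h p hp
    rw [show -((p : ℝ) * a) - α = -((p : ℝ) * a + α) by ring, Real.sin_neg,
      Real.sin_sub, Real.sin_add] at hp'
    set A := π₁ * ξ₁ p
    set B := π₂ * ξ₂ p
    set S := Real.sin ((p : ℝ) * a)
    set Cp := Real.cos ((p : ℝ) * a)
    set Sα := Real.sin α
    set Cα := Real.cos α
    -- hp' : A * (S * Cα - Cp * Sα) + -(B * (S * Cα + Cp * Sα)) = 0 (up to form)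
    have e : (A - B) * (S * Cα) = (A + B) * (Cp * Sα) := by linarith [hp']
    have py1 : S ^ 2 + Cp ^ 2 = 1 := Real.sin_sq_add_cos_sq _
    have py2 : Sα ^ 2 + Cα ^ 2 = 1 := Real.sin_sq_add_cos_sq _
    have e2 : ((A - B) * (S * Cα)) ^ 2 = ((A + B) * (Cp * Sα)) ^ 2 := by rw [e]
    have hAB : (A - B) ^ 2 ≤ (A + B) ^ 2 := by nlinarith
    have step : Cp ^ 2 * Sα ^ 2 ≤ S ^ 2 * Cα ^ 2 := by
      have h1 : (A + B) ^ 2 * (Cp ^ 2 * Sα ^ 2) ≤ (A + B) ^ 2 * (S ^ 2 * Cα ^ 2) := by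
        nlinarith [e2, mul_nonneg (sub_nonneg.mpr hAB) (sq_nonneg (S * Cα))]
      have hABpos : 0 < (A + B) ^ 2 := by positivity
      exact le_of_mul_le_mul_left h1 hABpos
    nlinarith [step]
  -- Step 2: if `sin α ≠ 0`, find `p` with `|sin (p * a)| < |sin α|`.
  by_contra hs
  have hs' : 0 < |Real.sin α| := abs_pos.mpr hs
  obtain ⟨n, hn⟩ := exists_nat_gt (Real.pi / |Real.sin α|)
  have hn0 : 0 < n := by
    have h0 : 0 < Real.pi / |Real.sin α| := div_pos Real.pi_pos hs'
    have : (0:ℝ) < n := h0.trans hn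
    exact_mod_cast this
  obtain ⟨j, k, hk0, hkn, hjk⟩ := Real.exists_int_int_abs_mul_sub_le (a / Real.pi) hn0
  set p : ℕ := k.toNat with hpdef
  have hkp : (p : ℤ) = k := Int.toNat_of_nonneg hk0.le
  have hp : 0 < p := by
    have h0 : (0:ℤ) < (p:ℤ) := hkp ▸ hk0
    exact_mod_cast h0
  -- |sin (p * a)| ≤ π * |k * (a/π) - j| ≤ π / (n+1) < |sin α|
  have hπne : Real.pi ≠ 0 := Real.pi_ne_zero
  have habs : |Real.sin ((p : ℝ) * a)| ≤ Real.pi / (n + 1) := by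
    have hrw : (p : ℝ) * a = ((k : ℝ) * (a / Real.pi) - (j : ℝ)) * Real.pi
        + (j : ℤ) * Real.pi := by
      have : ((p : ℕ) : ℝ) = (k : ℝ) := by exact_mod_cast congrArg (Int.cast : ℤ → ℝ) hkp
      field_simp [this]
      rw [this]; ring
    rw [hrw, Real.sin_add_int_mul_pi, abs_mul]
    have habs1 : |((-1 : ℝ)) ^ j| = 1 := by
      rcases Int.even_or_odd j with he | ho
      · rw [he.neg_one_zpow]; simp
      · rw [Odd.neg_one_zpow ho]; simp
    rw [habs1, one_mul]
    calc |Real.sin (((k : ℝ) * (a / Real.pi) - (j : ℝ)) * Real.pi)|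
        ≤ |((k : ℝ) * (a / Real.pi) - (j : ℝ)) * Real.pi| := Real.abs_sin_le_abs
      _ = |(k : ℝ) * (a / Real.pi) - (j : ℝ)| * Real.pi := by
          rw [abs_mul, abs_of_pos Real.pi_pos]
      _ ≤ (1 / (n + 1)) * Real.pi := by
          exact mul_le_mul_of_nonneg_right hjk Real.pi_pos.le
      _ = Real.pi / (n + 1) := by ring
  have hlt : Real.pi / (n + 1) < |Real.sin α| := by
    rw [div_lt_iff₀ (by positivity)]
    have : Real.pi < (n : ℝ) * |Real.sin α| := by
      rw [div_lt_iff₀ hs'] at hn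
      exact hn
    nlinarith [hs']
  have hcontra : |Real.sin ((p : ℝ) * a)| < |Real.sin α| := lt_of_le_of_lt habs hlt
  have := key p hp
  nlinarith [sq_abs (Real.sin ((p : ℝ) * a)), sq_abs (Real.sin α),
    mul_self_lt_mul_self (abs_nonneg (Real.sin ((p : ℝ) * a))) hcontra,
    abs_nonneg (Real.sin ((p : ℝ) * a))]
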